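/- Let t ↦ p_t solve d/dt log p_t(O_i) = D(p_t)(O_i) for each observation, where P_n[D(p_t)] = (1/n)∑_j (α_j^{(t)})² with α_j^{(t)} = (1/n)∑_i K^{(t)}(O_i,O_j). Then t ↦ P_n[log p_t] = (1/n)∑_i log p_t(O_i) is nondecreasing, and its derivative at t₁ vanishes if and only if the empirical mean embedding m_n^{(t₁)} = (1/n)∑_i k^{(t₁)}_{O_i} is zero in H_K^{(t₁)}. -/

import Mathlib

open scoped RealInnerProductSpace

/-- Monotonicity and stationarity of the empirical log-likelihood
along the ULFS–KDPE flow. The densities evaluated at the observations are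
`p t i = p_t(O_i) > 0`, the mean-zero RKHS sections at the observations are
`k t i = k^{(t)}_{O_i}` with kernel `K^{(t)}(O_i,O_j) = ⟪k t i, k t j⟫`,
`α_j^{(t)} = (1/n) ∑_i K^{(t)}(O_i,O_j)`,
`D(p_t)(O_i) = (1/n) ∑_j α_j^{(t)} K^{(t)}(O_i,O_j)`, and the flow satisfies
`d/dt log p_t(O_i) = D(p_t)(O_i)`. Then `t ↦ (1/n) ∑_i log p_t(O_i)` is
nondecreasing, and its derivative `(1/n) ∑_i D(p_{t₁})(O_i)` vanishes at `t₁`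
iff the empirical mean embedding `m_n^{(t₁)} = (1/n) ∑_i k^{(t₁)}_{O_i}` is
zero. -/
theorem stmt14 {H : Type*} [NormedAddCommGroup H] [InnerProductSpace ℝ H]
    (n : ℕ) (hn : 0 < n)
    (p : ℝ → Fin n → ℝ) (hpos : ∀ t i, 0 < p t i)
    (k : ℝ → Fin n → H)
    (Kt : ℝ → Fin n → Fin n → ℝ)
    (hKt : ∀ t i j, Kt t i j = ⟪k t i, k t j⟫)
    (a : ℝ → Fin n → ℝ)
    (ha : ∀ t j, a t j = ((1 : ℝ) / n) * ∑ i, Kt t i j)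
    (D : ℝ → Fin n → ℝ)
    (hD : ∀ t i, D t i = ((1 : ℝ) / n) * ∑ j, a t j * Kt t i j)
    (hflow : ∀ t i, HasDerivAt (fun s => Real.log (p s i)) (D t i) t) :
    Monotone (fun t => ((1 : ℝ) / n) * ∑ i, Real.log (p t i)) ∧
    ∀ t₁ : ℝ,
      (((1 : ℝ) / n) * ∑ i, D t₁ i = 0 ↔
        ((1 : ℝ) / n) • ∑ i, k t₁ i = (0 : H)) := by

  have hnR : (0:ℝ) < n := by exact_mod_cast hn
  -- a t j = inner (m t) (k t j)
  have ham : ∀ t j, a t j = ⟪((1:ℝ)/n) • ∑ i, k t i, k t j⟫ := by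
    intro t j
    rw [ha, inner_smul_left, sum_inner]
    simp only [hKt, RCLike.conj_to_real]
  -- key: (1/n) ∑ D t i = (1/n) ∑ (a t j)^2
  have key : ∀ t, ((1:ℝ)/n) * ∑ i, D t i = ((1:ℝ)/n) * ∑ j, (a t j)^2 := by
    intro t
    congr 1
    calc ∑ i, D t i = ∑ i, ∑ j, ((1:ℝ)/n) * (a t j * Kt t i j) := by
          simp only [hD, Finset.mul_sum]
      _ = ∑ j, a t j * (((1:ℝ)/n) * ∑ i, Kt t i j) := by
          rw [Finset.sum_comm]
          refine Finset.sum_congr rfl fun j _ => ?_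
          simp only [Finset.mul_sum]
          exact Finset.sum_congr rfl fun i _ => by ring
      _ = ∑ j, (a t j)^2 := by
          refine Finset.sum_congr rfl fun j _ => ?_
          rw [← ha]; ring
  have hnonneg : ∀ t, (0:ℝ) ≤ ((1:ℝ)/n) * ∑ i, D t i := by
    intro t
    rw [key]
    exact mul_nonneg (by positivity) (Finset.sum_nonneg fun j _ => sq_nonneg _)
  constructor
  · have hder : ∀ t, HasDerivAt (fun s => ((1:ℝ)/n) * ∑ i, Real.log (p s i))
        (((1:ℝ)/n) * ∑ i, D t i) t := by
      intro t
      exact (HasDerivAt.fun_sum (fun i _ => hflow t i)).const_mul _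
    exact monotone_of_deriv_nonneg
      (fun t => (hder t).differentiableAt)
      (fun t => (hder t).deriv ▸ hnonneg t)
  · intro t₁
    rw [key]
    constructor
    · intro h
      have hz : ∀ j ∈ Finset.univ, (a t₁ j)^2 = 0 := by
        have := (mul_eq_zero.mp h).resolve_left (by positivity)
        exact (Finset.sum_eq_zero_iff_of_nonneg fun j _ => sq_nonneg _).mp this
      have haz : ∀ j, a t₁ j = 0 := fun j => pow_eq_zero_iff (by norm_num) |>.mp (hz j (Finset.mem_univ j))
      have : ⟪((1:ℝ)/n) • ∑ i, k t₁ i, ((1:ℝ)/n) • ∑ i, k t₁ i⟫ = 0 := by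
        rw [inner_smul_right, inner_sum]
        simp only [← ham]
        simp [haz]
      exact inner_self_eq_zero.mp this
    · intro h
      have haz : ∀ j, a t₁ j = 0 := by
        intro j; rw [ham, h, inner_zero_left]
      simp [haz]
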